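/- Let r, s ∈ ℂ and let W = U_{−1,r} ⊕ U_{0,s}, equipped with the linear endomorphisms e, h, f acting diagonally (by the given action on each summand). Then there exist linear endomorphisms X, Y of W such that (e, h, f, X, Y) is an osp(1|2)-representation on W if and only if r − s ∈ ℤ. -/
import Mathlib


/-!
`W = U_{−1,r} ⊕ U_{0,s}` is modeled on `(ℤ ⊕ ℤ) →₀ ℂ`, where `Sum.inl i` encodes the
basis vector `E_i` of `U_{−1,r}` and `Sum.inr i` encodes the basis vector `E_i` of
`U_{0,s}`; `e, h, f` act diagonally by the defining formulas
`e·E_i = E_{i−1}`, `h·E_i = −(2r+2i−μ)·E_i`, `f·E_i = −(r+i+1)(r+i−μ)·E_{i+1}`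
with `μ = −1` on the first summand and `μ = 0` on the second.
-/

/-- An `osp(1|2)`-representation on a complex vector space `W`: a 5-tuple of
endomorphisms `(E,H,F,X,Y)` satisfying the twelve defining relations of `osp(1|2)`. -/
def IsOspRep {W : Type*} [AddCommGroup W] [Module ℂ W]
    (E H F X Y : Module.End ℂ W) : Prop :=
  H * E - E * H = (2 : ℂ) • E ∧
  H * F - F * H = (-2 : ℂ) • F ∧
  E * F - F * E = H ∧
  H * X - X * H = X ∧
  E * X - X * E = 0 ∧
  F * X - X * F = -Y ∧
  H * Y - Y * H = -Y ∧
  E * Y - Y * E = -X ∧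
  F * Y - Y * F = 0 ∧
  X * X = E ∧
  X * Y + Y * X = H ∧
  Y * Y = -F

/-- The diagonal action of `e` on `U_{−1,r} ⊕ U_{0,s}`. -/
noncomputable def eSum : Module.End ℂ ((ℤ ⊕ ℤ) →₀ ℂ) :=
  Finsupp.lift ((ℤ ⊕ ℤ) →₀ ℂ) ℂ (ℤ ⊕ ℤ)
    (Sum.elim (fun i => Finsupp.single (Sum.inl (i - 1)) 1)
              (fun i => Finsupp.single (Sum.inr (i - 1)) 1))

/-- The diagonal action of `h` on `U_{−1,r} ⊕ U_{0,s}`. -/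
noncomputable def hSum (r s : ℂ) : Module.End ℂ ((ℤ ⊕ ℤ) →₀ ℂ) :=
  Finsupp.lift ((ℤ ⊕ ℤ) →₀ ℂ) ℂ (ℤ ⊕ ℤ)
    (Sum.elim (fun i => (-(2 * r + 2 * (i : ℂ) + 1)) • Finsupp.single (Sum.inl i) 1)
              (fun i => (-(2 * s + 2 * (i : ℂ))) • Finsupp.single (Sum.inr i) 1))

/-- The diagonal action of `f` on `U_{−1,r} ⊕ U_{0,s}`. -/
noncomputable def fSum (r s : ℂ) : Module.End ℂ ((ℤ ⊕ ℤ) →₀ ℂ) :=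
  Finsupp.lift ((ℤ ⊕ ℤ) →₀ ℂ) ℂ (ℤ ⊕ ℤ)
    (Sum.elim
      (fun i => (-((r + (i : ℂ) + 1) * (r + (i : ℂ) + 1))) • Finsupp.single (Sum.inl (i + 1)) 1)
      (fun i => (-((s + (i : ℂ) + 1) * (s + (i : ℂ)))) • Finsupp.single (Sum.inr (i + 1)) 1))

/-- The odd operator `X` used in the construction, when `r - s = n`. -/
noncomputable def Xop (n : ℤ) : Module.End ℂ ((ℤ ⊕ ℤ) →₀ ℂ) :=
  Finsupp.lift ((ℤ ⊕ ℤ) →₀ ℂ) ℂ (ℤ ⊕ ℤ)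
    (Sum.elim (fun i => Finsupp.single (Sum.inr (i + n)) 1)
              (fun j => Finsupp.single (Sum.inl (j - n - 1)) 1))

/-- The odd operator `Y` used in the construction, when `r - s = n`. -/
noncomputable def Yop (r : ℂ) (n : ℤ) : Module.End ℂ ((ℤ ⊕ ℤ) →₀ ℂ) :=
  Finsupp.lift ((ℤ ⊕ ℤ) →₀ ℂ) ℂ (ℤ ⊕ ℤ)
    (Sum.elim (fun i => (-(r + (i : ℂ) + 1)) • Finsupp.single (Sum.inr (i + n + 1)) 1)
              (fun j => (-(r - n + (j : ℂ))) • Finsupp.single (Sum.inl (j - n)) 1))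

theorem lift_single (f : ℤ ⊕ ℤ → (ℤ ⊕ ℤ) →₀ ℂ) (a : ℤ ⊕ ℤ) (c : ℂ) :
    Finsupp.lift ((ℤ ⊕ ℤ) →₀ ℂ) ℂ (ℤ ⊕ ℤ) f (Finsupp.single a c) = c • f a := by
  simp [Finsupp.lift_apply]

/-- The diagonal entries of `h`. -/
noncomputable def dg (r s : ℂ) : ℤ ⊕ ℤ → ℂ :=
  Sum.elim (fun i => -(2*r + 2*(i:ℂ) + 1)) (fun i => -(2*s + 2*(i:ℂ)))

theorem hSum_coord (r s : ℂ) (w : (ℤ ⊕ ℤ) →₀ ℂ) (j : ℤ ⊕ ℤ) :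
    (hSum r s w) j = dg r s j * w j := by
  have : hSum r s w = w.sum fun k c => c • ((dg r s k) • Finsupp.single k 1) := by
    simp only [hSum, Finsupp.lift_apply]
    congr 1
    ext k c
    rcases k with k | k <;> simp [dg]
  rw [this, Finsupp.sum_apply]
  rw [Finsupp.sum]
  simp only [Finsupp.smul_apply, Finsupp.single_apply, smul_eq_mul, mul_ite, mul_one, mul_zero]
  rw [Finset.sum_ite_eq' w.support j (fun k => w k * dg r s k)]
  by_cases hj : j ∈ w.support
  · simp [hj, mul_comm]
  · simp [hj, Finsupp.notMem_support_iff.mp hj]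

theorem hSum_single (r s : ℂ) (k : ℤ ⊕ ℤ) :
    hSum r s (Finsupp.single k 1) = dg r s k • Finsupp.single k 1 := by
  rcases k with k | k <;> simp [hSum, lift_single, dg]

set_option maxHeartbeats 1600000 in
theorem rep_of_int (r s : ℂ) (n : ℤ) (hs : s = r - n) :
    IsOspRep eSum (hSum r s) (fSum r s) (Xop n) (Yop r n) := by
  subst hs
  refine ⟨?_, ?_, ?_, ?_, ?_, ?_, ?_, ?_, ?_, ?_, ?_, ?_⟩ <;>
  refine Finsupp.lhom_ext fun a c => ?_ <;>
  rcases a with i | i <;>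
  simp only [eSum, hSum, fSum, Xop, Yop, Module.End.mul_apply, LinearMap.sub_apply,
    LinearMap.add_apply, LinearMap.neg_apply, LinearMap.smul_apply, LinearMap.zero_apply,
    lift_single, Sum.elim_inl, Sum.elim_inr, map_smul, map_neg, smul_smul,
    Finsupp.smul_single, smul_eq_mul, mul_one, Finsupp.single_neg] <;>
  refine Finsupp.ext fun j => ?_ <;>
  rcases j with j | j <;>
  simp only [Finsupp.single_apply, Finsupp.coe_sub, Finsupp.coe_add, Finsupp.coe_neg,
    Pi.sub_apply, Pi.add_apply, Pi.neg_apply, Finsupp.smul_apply, smul_eq_mul,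
    Finsupp.coe_zero, Pi.zero_apply, Sum.inl.injEq, Sum.inr.injEq, reduceCtorEq,
    if_false, mul_ite, mul_zero, mul_one, mul_neg] <;>
  first
    | ring1
    | (split_ifs <;> first | omega | (push_cast; ring1))

/-- `U_{−1,r} ⊕ U_{0,s}` extends to an `osp(1|2)`-representation (for some odd operators
`X, Y`) if and only if `r − s ∈ ℤ`. -/
theorem osp_structure_iff_integer_difference (r s : ℂ) :
    (∃ X Y : Module.End ℂ ((ℤ ⊕ ℤ) →₀ ℂ),
      IsOspRep eSum (hSum r s) (fSum r s) X Y) ↔ ∃ n : ℤ, r - s = n := by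
  constructor
  · rintro ⟨X, Y, h1, h2, h3, h4, h5, h6, h7, h8, h9, h10, h11, h12⟩
    by_contra hint
    -- X raises the h-eigenvalue by 1, but no eigenvalue +1 is an eigenvalue.
    have hne : ∀ j k : ℤ ⊕ ℤ, dg r s j ≠ dg r s k + 1 := by
      rintro (a | a) (b | b) heq <;> simp only [dg, Sum.elim_inl, Sum.elim_inr] at heq
      · have h2 : ((2*a : ℤ) : ℂ) = ((2*b - 1 : ℤ) : ℂ) := by push_cast; linear_combination -heq
        have := Int.cast_injective (α := ℂ) h2
        omega
      · exact hint ⟨b - a - 1, by push_cast; linear_combination (-1/2 : ℂ) * heq⟩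
      · exact hint ⟨a - b, by push_cast; linear_combination (1/2 : ℂ) * heq⟩
      · have h2 : ((2*a : ℤ) : ℂ) = ((2*b - 1 : ℤ) : ℂ) := by push_cast; linear_combination -heq
        have := Int.cast_injective (α := ℂ) h2
        omega
    have hX1 : ∀ k : ℤ ⊕ ℤ, X (Finsupp.single k 1) = 0 := by
      intro k
      have hev : hSum r s (X (Finsupp.single k 1))
          = (dg r s k + 1) • X (Finsupp.single k 1) := by
        have := congrArg (fun T : Module.End ℂ ((ℤ ⊕ ℤ) →₀ ℂ) => T (Finsupp.single k 1)) h4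
        simp only [LinearMap.sub_apply, Module.End.mul_apply] at this
        rw [hSum_single, map_smul] at this
        have h' : hSum r s (X (Finsupp.single k 1))
            = X (Finsupp.single k 1) + dg r s k • X (Finsupp.single k 1) := by
          linear_combination (norm := module) this
        rw [h', add_smul, one_smul, add_comm]
      refine Finsupp.ext fun j => ?_
      have hc := congrArg (fun w : (ℤ ⊕ ℤ) →₀ ℂ => w j) hev
      simp only [hSum_coord, Finsupp.smul_apply, smul_eq_mul] at hc
      have hfac : (dg r s j - (dg r s k + 1)) * (X (Finsupp.single k 1)) j = 0 := by
        linear_combination hc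
      rcases mul_eq_zero.mp hfac with h | h
      · exact absurd (by linear_combination h) (hne j k)
      · simpa using h
    have hX0 : X = 0 := by
      refine Finsupp.lhom_ext fun k c => ?_
      have : Finsupp.single k c = c • Finsupp.single k (1 : ℂ) := by
        simp [Finsupp.smul_single]
      rw [this, map_smul, hX1, smul_zero]
      simp
    have he0 : eSum (Finsupp.single (Sum.inl 0) 1) = 0 := by
      rw [← h10]
      simp [Module.End.mul_apply, hX0]
    rw [eSum, lift_single] at he0
    simp only [Sum.elim_inl, one_smul] at he0
    exact one_ne_zero ((Finsupp.single_eq_zero).mp he0)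
  · rintro ⟨n, hn⟩
    exact ⟨Xop n, Yop r n, rep_of_int r s n (by linear_combination -hn)⟩
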